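/- Every 2CNF formula in MU(1) has a read-once resolution refutation. -/

import Mathlib

/-! Basic definitions: literals, clauses, CNF formulas. -/

/-- A literal is a variable together with a polarity. -/
abbrev Lit (V : Type) : Type := V × Bool

/-- Negation of a literal. -/
def Lit.neg {V : Type} (l : Lit V) : Lit V := (l.1, !l.2)

/-- A clause is a finite set of literals (a disjunction). -/
abbrev Clause (V : Type) : Type := Finset (Lit V)

/-- A CNF formula is a finite set of clauses (a conjunction). -/
abbrev CNF (V : Type) : Type := Finset (Clause V)

section BasicDefs

variable {V : Type} [DecidableEq V]

/-- A literal holds under a Boolean assignment. -/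
def Lit.holds (a : V → Bool) (l : Lit V) : Prop := a l.1 = l.2

/-- A clause holds under an assignment if some literal in it holds. -/
def Clause.holds (a : V → Bool) (C : Clause V) : Prop := ∃ l ∈ C, Lit.holds a l

/-- A CNF formula is satisfiable. -/
def CNF.sat (Φ : CNF V) : Prop := ∃ a : V → Bool, ∀ C ∈ Φ, Clause.holds a C

/-- A CNF formula is unsatisfiable. -/
def CNF.unsat (Φ : CNF V) : Prop := ¬ CNF.sat Φ

/-- A CNF formula is minimal unsatisfiable: it is unsatisfiable and every
proper subformula is satisfiable. -/
def CNF.minUnsat (Φ : CNF V) : Prop :=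
  CNF.unsat Φ ∧ ∀ Ψ : CNF V, Ψ ⊂ Φ → CNF.sat Ψ

/-- The set of variables occurring in a formula. -/
def CNF.vars (Φ : CNF V) : Finset V := Φ.biUnion (fun C => C.image Prod.fst)

/-- The deficiency of a formula: number of clauses minus number of variables. -/
def CNF.deficiency (Φ : CNF V) : ℤ := (Φ.card : ℤ) - ((CNF.vars Φ).card : ℤ)

/-- MU(1): minimal unsatisfiable with deficiency 1. -/
def CNF.MU1 (Φ : CNF V) : Prop := CNF.minUnsat Φ ∧ CNF.deficiency Φ = 1

/-- A 2CNF formula: every clause has at most 2 literals. -/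
def CNF.is2CNF (Φ : CNF V) : Prop := ∀ C ∈ Φ, C.card ≤ 2

/-- `R` is the resolvent of `C1` and `C2` upon the matching variable `x`. -/
def IsResolvent (C1 C2 R : Clause V) (x : V) : Prop :=
  (x, true) ∈ C1 ∧ (x, false) ∈ C2 ∧
    R = (C1.erase (x, true)) ∪ (C2.erase (x, false))

/-- One step of read-once resolution on a multiset of clauses: the two parent
clauses are removed from the current multiset and the resolvent is added. -/
def RORStep (S T : Multiset (Clause V)) : Prop :=
  ∃ (C1 C2 R : Clause V) (x : V),
    C1 ∈ S ∧ C2 ∈ S.erase C1 ∧ IsResolvent C1 C2 R x ∧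
    T = R ::ₘ ((S.erase C1).erase C2)

/-- Read-once derivability of the clause `π` from the multiset of clauses `S`. -/
def RORDeriv (S : Multiset (Clause V)) (π : Clause V) : Prop :=
  ∃ T : Multiset (Clause V), Relation.ReflTransGen RORStep S T ∧ π ∈ T

/-- The formula `Φ` has a read-once resolution refutation. -/
def CNF.hasROR (Φ : CNF V) : Prop := RORDeriv (Φ.val) (∅ : Clause V)

end BasicDefs

/-- A resolution step: two parent clauses, a matching variable and a resolvent. -/
structure RStep (V : Type) where
  c1 : Clause V
  c2 : Clause V
  mv : V
  res : Clause V

section MoreDefs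

variable {V : Type} [DecidableEq V]

/-- Validity of a resolution step. -/
def RStep.valid (s : RStep V) : Prop := IsResolvent s.c1 s.c2 s.res s.mv

/-- A list of resolution steps is a resolution derivation from `Φ`: each step is a
valid resolution step whose parents are clauses of `Φ` or resolvents of earlier steps. -/
def IsResDeriv (Φ : CNF V) (L : List (RStep V)) : Prop :=
  ∀ (i : ℕ) (h : i < L.length),
    RStep.valid (L.get ⟨i, h⟩) ∧
    ((L.get ⟨i, h⟩).c1 ∈ Φ ∨
      ∃ j, ∃ _ : j < i, (L.get ⟨j, by omega⟩).res = (L.get ⟨i, h⟩).c1) ∧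
    ((L.get ⟨i, h⟩).c2 ∈ Φ ∨
      ∃ j, ∃ _ : j < i, (L.get ⟨j, by omega⟩).res = (L.get ⟨i, h⟩).c2)

/-- `Φ` has a Var-ROR refutation: a resolution refutation in which every variable
is used at most once as a matching variable. -/
def CNF.hasVarROR (Φ : CNF V) : Prop :=
  ∃ L : List (RStep V), IsResDeriv Φ L ∧ (L.map RStep.mv).Nodup ∧
    ∃ s ∈ L, s.res = (∅ : Clause V)

/-- `(Fx, Fnx)` is a splitting of `Φ` over the variable `x`: `Fx` consists of all clauses
of `Φ` containing the literal `x` with that literal removed, together with some clauses of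
`Φ` not containing `x` nor `¬x` (and symmetrically for `Fnx` with `¬x`), and both `Fx` and
`Fnx` are minimal unsatisfiable. -/
def IsSplitting (Φ : CNF V) (x : V) (Fx Fnx : CNF V) : Prop :=
  ∃ S1 S2 : CNF V,
    S1 ⊆ Φ ∧ S2 ⊆ Φ ∧
    (∀ C ∈ S1, (x, true) ∉ C ∧ (x, false) ∉ C) ∧
    (∀ C ∈ S2, (x, true) ∉ C ∧ (x, false) ∉ C) ∧
    Fx = ((Φ.filter (fun C => (x, true) ∈ C)).image (fun C => C.erase (x, true))) ∪ S1 ∧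
    Fnx = ((Φ.filter (fun C => (x, false) ∈ C)).image (fun C => C.erase (x, false))) ∪ S2 ∧
    CNF.minUnsat Fx ∧ CNF.minUnsat Fnx

/-- A disjunctive splitting: a splitting where `Fx` and `Fnx` have no clause `σ_i`
(clause of `Φ` mentioning neither `x` nor `¬x`) in common. -/
def IsDisjSplitting (Φ : CNF V) (x : V) (Fx Fnx : CNF V) : Prop :=
  ∃ S1 S2 : CNF V,
    S1 ⊆ Φ ∧ S2 ⊆ Φ ∧ Disjoint S1 S2 ∧
    (∀ C ∈ S1, (x, true) ∉ C ∧ (x, false) ∉ C) ∧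
    (∀ C ∈ S2, (x, true) ∉ C ∧ (x, false) ∉ C) ∧
    Fx = ((Φ.filter (fun C => (x, true) ∈ C)).image (fun C => C.erase (x, true))) ∪ S1 ∧
    Fnx = ((Φ.filter (fun C => (x, false) ∈ C)).image (fun C => C.erase (x, false))) ∪ S2 ∧
    CNF.minUnsat Fx ∧ CNF.minUnsat Fnx

end MoreDefs


section AuxProofs
variable {V : Type} [DecidableEq V]

lemma var_mem_vars {Φ : CNF V} {C : Clause V} {l : Lit V}
    (hC : C ∈ Φ) (hl : l ∈ C) : l.1 ∈ CNF.vars Φ :=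
  Finset.mem_biUnion.2 ⟨C, hC, Finset.mem_image.2 ⟨l, hl, rfl⟩⟩

lemma no_taut {Φ : CNF V} (h : CNF.minUnsat Φ) {C : Clause V} (hC : C ∈ Φ)
    {x : V} (h1 : (x, true) ∈ C) (h2 : (x, false) ∈ C) : False := by
  obtain ⟨a, ha⟩ := h.2 (Φ.erase C) (Finset.erase_ssubset hC)
  apply h.1
  refine ⟨a, fun D hD => ?_⟩
  by_cases hDC : D = C
  · subst hDC
    cases hb : a x
    · exact ⟨(x, false), h2, hb⟩
    · exact ⟨(x, true), h1, hb⟩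
  · exact ha D (Finset.mem_erase.2 ⟨hDC, hD⟩)

lemma exists_polarity {Φ : CNF V} (h : CNF.minUnsat Φ) {x : V}
    (hx : x ∈ CNF.vars Φ) (b : Bool) : ∃ C ∈ Φ, (x, b) ∈ C := by
  by_contra hcon
  push_neg at hcon
  rw [CNF.vars, Finset.mem_biUnion] at hx
  obtain ⟨C0, hC0, hxC0⟩ := hx
  rw [Finset.mem_image] at hxC0
  obtain ⟨l, hl, hl1⟩ := hxC0
  have hlb : (x, !b) ∈ C0 := by
    obtain ⟨y, c⟩ := l
    simp only at hl1; subst hl1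
    have hcb : c ≠ b := fun he => hcon _ hC0 (he ▸ hl)
    have : c = !b := by cases b <;> cases c <;> simp_all
    exact this ▸ hl
  obtain ⟨α, hα⟩ := h.2 (Φ.erase C0) (Finset.erase_ssubset hC0)
  apply h.1
  refine ⟨Function.update α x (!b), fun D hD => ?_⟩
  by_cases hDC : D = C0
  · subst hDC
    exact ⟨(x, !b), hlb, by simp [Lit.holds]⟩
  · obtain ⟨m, hm, hmh⟩ := hα D (Finset.mem_erase.2 ⟨hDC, hD⟩)
    refine ⟨m, hm, ?_⟩
    by_cases hmx : m.1 = x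
    · have hm2 : m.2 ≠ b := fun he => hcon D hD (by
        have : m = (x, b) := Prod.ext hmx he
        exact this ▸ hm)
      have h2b : m.2 = !b := by cases b <;> cases hc : m.2 <;> simp_all
      show Function.update α x (!b) m.1 = m.2
      rw [hmx, Function.update_self, h2b]
    · show Function.update α x (!b) m.1 = m.2
      rw [Function.update_of_ne hmx]
      exact hmh

lemma filter_prod_eq {Φ : CNF V} {C : Clause V} (hC : C ∈ Φ) :
    ((CNF.vars Φ) ×ˢ (Finset.univ : Finset Bool)).filter (· ∈ C) = C := by
  ext l
  simp only [Finset.mem_filter, Finset.mem_product, Finset.mem_univ, and_true]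
  exact ⟨fun h => h.2, fun h => ⟨var_mem_vars hC h, h⟩⟩

lemma sum_card {Φ : CNF V} :
    ∑ x ∈ CNF.vars Φ, ((Φ.filter (fun C => (x, true) ∈ C)).card
      + (Φ.filter (fun C => (x, false) ∈ C)).card) = ∑ C ∈ Φ, C.card := by
  have step1 : ∀ x ∈ CNF.vars Φ, (Φ.filter (fun C => (x, true) ∈ C)).card
      + (Φ.filter (fun C => (x, false) ∈ C)).card
      = ∑ C ∈ Φ, ((if (x, true) ∈ C then 1 else 0) + (if (x, false) ∈ C then 1 else 0)) := by
    intro x _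
    rw [Finset.sum_add_distrib, Finset.card_filter, Finset.card_filter]
  rw [Finset.sum_congr rfl step1, Finset.sum_comm]
  refine Finset.sum_congr rfl fun C hC => ?_
  have h1 : ∑ x ∈ CNF.vars Φ,
      ((if (x, true) ∈ C then 1 else 0) + (if (x, false) ∈ C then 1 else 0))
      = ∑ l ∈ (CNF.vars Φ) ×ˢ (Finset.univ : Finset Bool), (if l ∈ C then 1 else 0) := by
    rw [Finset.sum_product]
    refine Finset.sum_congr rfl fun x _ => ?_
    rw [Fintype.sum_bool]
  rw [h1, ← Finset.card_filter, filter_prod_eq hC]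



lemma occ_le {Φ : CNF V} (h : CNF.minUnsat Φ) (x : V) :
    (Φ.filter (fun C => (x, true) ∈ C)).card
      + (Φ.filter (fun C => (x, false) ∈ C)).card ≤ Φ.card := by
  have hdisj : Disjoint (Φ.filter (fun C => (x, true) ∈ C))
      (Φ.filter (fun C => (x, false) ∈ C)) := by
    rw [Finset.disjoint_left]
    intro C hC1 hC2
    rw [Finset.mem_filter] at hC1 hC2
    exact no_taut h hC1.1 hC1.2 hC2.2
  rw [← Finset.card_union_of_disjoint hdisj]
  exact Finset.card_le_card (Finset.union_subset (Finset.filter_subset _ _)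
    (Finset.filter_subset _ _))

lemma exists_deg2 {Φ : CNF V} (h : CNF.MU1 Φ) (h2 : CNF.is2CNF Φ)
    (hne : (∅ : Clause V) ∉ Φ) :
    ∃ x : V, (Φ.filter (fun C => (x, true) ∈ C)).card = 1
      ∧ (Φ.filter (fun C => (x, false) ∈ C)).card = 1 := by
  by_contra hcon
  push_neg at hcon
  have hcard : Φ.card = (CNF.vars Φ).card + 1 := by
    have hd := h.2
    unfold CNF.deficiency at hd
    omega
  have hp : ∀ x ∈ CNF.vars Φ, 1 ≤ (Φ.filter (fun C => (x, true) ∈ C)).card := by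
    intro x hx
    obtain ⟨C, hC, hxC⟩ := exists_polarity h.1 hx true
    exact Finset.card_pos.2 ⟨C, Finset.mem_filter.2 ⟨hC, hxC⟩⟩
  have hq : ∀ x ∈ CNF.vars Φ, 1 ≤ (Φ.filter (fun C => (x, false) ∈ C)).card := by
    intro x hx
    obtain ⟨C, hC, hxC⟩ := exists_polarity h.1 hx false
    exact Finset.card_pos.2 ⟨C, Finset.mem_filter.2 ⟨hC, hxC⟩⟩
  have hocc : ∀ x ∈ CNF.vars Φ, 3 ≤ (Φ.filter (fun C => (x, true) ∈ C)).card
      + (Φ.filter (fun C => (x, false) ∈ C)).card := by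
    intro x hx
    have h1 := hp x hx
    have h2 := hq x hx
    by_cases he : (Φ.filter (fun C => (x, true) ∈ C)).card = 1
    · have := hcon x he
      omega
    · omega
  have hsum2 : ∑ C ∈ Φ, C.card ≤ 2 * ((CNF.vars Φ).card + 1) := by
    calc ∑ C ∈ Φ, C.card ≤ ∑ C ∈ Φ, 2 := Finset.sum_le_sum (fun C hC => h2 C hC)
    _ = 2 * Φ.card := by rw [Finset.sum_const, smul_eq_mul, mul_comm]
    _ = 2 * ((CNF.vars Φ).card + 1) := by rw [hcard]
  have h3n : 3 * (CNF.vars Φ).card ≤ ∑ C ∈ Φ, C.card := by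
    rw [← sum_card]
    calc 3 * (CNF.vars Φ).card = ∑ _x ∈ CNF.vars Φ, 3 := by
          rw [Finset.sum_const, smul_eq_mul, mul_comm]
    _ ≤ _ := Finset.sum_le_sum hocc
  have hn2 : (CNF.vars Φ).card ≤ 2 := by omega
  -- case n = 0
  rcases Nat.lt_or_ge (CNF.vars Φ).card 1 with hn0 | hn1
  · have hv : CNF.vars Φ = ∅ := Finset.card_eq_zero.1 (by omega)
    have hc1 : Φ.card = 1 := by omega
    obtain ⟨C, hC⟩ := Finset.card_eq_one.1 hc1
    have hCmem : C ∈ Φ := hC ▸ Finset.mem_singleton_self C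
    have : C = ∅ := by
      rw [Finset.eq_empty_iff_forall_notMem]
      intro l hl
      have := var_mem_vars hCmem hl
      rw [hv] at this
      exact absurd this (Finset.notMem_empty _)
    exact hne (this ▸ hCmem)
  rcases Nat.lt_or_ge (CNF.vars Φ).card 2 with hn1' | hn2'
  · -- n = 1
    have hv1 : (CNF.vars Φ).card = 1 := by omega
    obtain ⟨x, hx⟩ := Finset.card_eq_one.1 hv1
    have hxmem : x ∈ CNF.vars Φ := hx ▸ Finset.mem_singleton_self x
    have := hocc x hxmem
    have := occ_le h.1 x
    omega
  · -- n = 2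
    have hv2 : (CNF.vars Φ).card = 2 := by omega
    obtain ⟨x, y, hxy, hv⟩ := Finset.card_eq_two.1 hv2
    have hxmem : x ∈ CNF.vars Φ := by rw [hv]; simp
    have hymem : y ∈ CNF.vars Φ := by rw [hv]; simp
    have hc3 : Φ.card = 3 := by omega
    have hsum6 : ∑ C ∈ Φ, C.card = 6 := by
      have hge : 6 ≤ ∑ C ∈ Φ, C.card := by
        rw [← sum_card, hv, Finset.sum_pair hxy]
        have := hocc x hxmem
        have := hocc y hymem
        omega
      omega
    have hall2 : ∀ C ∈ Φ, C.card = 2 := by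
      by_contra hcc
      push_neg at hcc
      obtain ⟨C0, hC0, hC0ne⟩ := hcc
      have hlt : ∑ C ∈ Φ, C.card < ∑ C ∈ Φ, 2 :=
        Finset.sum_lt_sum (fun C hC => h2 C hC)
          ⟨C0, hC0, lt_of_le_of_ne (h2 C0 hC0) hC0ne⟩
      rw [Finset.sum_const, smul_eq_mul, hc3] at hlt
      omega
    have hshape : ∀ C ∈ Φ, ∃ cx cy : Bool, C = {(x, cx), (y, cy)} := by
      intro C hC
      obtain ⟨l, m, hlm, hCe⟩ := Finset.card_eq_two.1 (hall2 C hC)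
      have hlC : l ∈ C := by rw [hCe]; simp
      have hmC : m ∈ C := by rw [hCe]; simp
      have hl1 : l.1 ∈ ({x, y} : Finset V) := hv ▸ var_mem_vars hC hlC
      have hm1 : m.1 ∈ ({x, y} : Finset V) := hv ▸ var_mem_vars hC hmC
      rw [Finset.mem_insert, Finset.mem_singleton] at hl1 hm1
      have hne1 : l.1 ≠ m.1 := by
        intro he
        have h22 : l.2 ≠ m.2 := fun he2 => hlm (Prod.ext he he2)
        have hlC' : (l.1, l.2) ∈ C := hlC
        have hmC' : (l.1, m.2) ∈ C := by
          have : m = (l.1, m.2) := Prod.ext he.symm rfl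
          exact this ▸ hmC
        cases hc : l.2 <;> cases hc2 : m.2
        · exact h22 (hc.trans hc2.symm)
        · exact no_taut h.1 hC (hc2 ▸ hmC') (hc ▸ hlC')
        · exact no_taut h.1 hC (hc ▸ hlC') (hc2 ▸ hmC')
        · exact h22 (hc.trans hc2.symm)
      rcases hl1 with hlx | hly
      · have hmy : m.1 = y := hm1.resolve_left (hlx ▸ hne1.symm)
        refine ⟨l.2, m.2, ?_⟩
        rw [hCe, ← hlx, ← hmy]
      · have hmx : m.1 = x := hm1.resolve_right (hly ▸ hne1.symm)
        refine ⟨m.2, l.2, ?_⟩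
        rw [hCe, ← hmx, ← hly, Finset.pair_comm]
    set g : Clause V → Bool × Bool :=
      fun C => (decide ((x, true) ∈ C), decide ((y, true) ∈ C)) with hg
    have himg : Φ.image g ≠ Finset.univ := by
      intro heq
      have h4 : (Finset.univ : Finset (Bool × Bool)).card = 4 := by decide
      have h3 : (Φ.image g).card ≤ 3 := hc3 ▸ Finset.card_image_le
      rw [heq, h4] at h3
      omega
    have hex : ∃ p : Bool × Bool, p ∉ Φ.image g := by
      by_contra hall
      push_neg at hall
      exact himg (Finset.eq_univ_iff_forall.2 hall)
    obtain ⟨⟨a, b⟩, hab⟩ := hex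
    apply h.1.1
    refine ⟨fun v => if v = x then !a else if v = y then !b else true, fun C hC => ?_⟩
    obtain ⟨cx, cy, hC'⟩ := hshape C hC
    have hgC : g C = (cx, cy) := by
      subst hC'
      cases cx <;> cases cy <;>
        simp [hg, Finset.mem_insert, Finset.mem_singleton, Prod.ext_iff, hxy, Ne.symm hxy]
    have hne' : (cx, cy) ≠ (a, b) := by
      intro he
      apply hab
      rw [← he, ← hgC]
      exact Finset.mem_image_of_mem g hC
    by_cases hcx : cx = a
    · have hcy : cy ≠ b := fun hb2 => hne' (by rw [hcx, hb2])
      refine ⟨(y, cy), by rw [hC']; simp, ?_⟩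
      show (if y = x then !a else if y = y then !b else true) = cy
      rw [if_neg (Ne.symm hxy), if_pos rfl]
      cases b <;> cases cy <;> simp_all
    · refine ⟨(x, cx), by rw [hC']; simp, ?_⟩
      show (if x = x then !a else if x = y then !b else true) = cx
      rw [if_pos rfl]
      cases a <;> cases cx <;> simp_all

lemma key_step {Φ : CNF V} (h2 : CNF.is2CNF Φ) (h : CNF.MU1 Φ)
    {x : V} {C1 C2 : Clause V} (hC1 : C1 ∈ Φ) (hC2 : C2 ∈ Φ)
    (hx1 : (x, true) ∈ C1) (hx2 : (x, false) ∈ C2)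
    (hu1 : ∀ D ∈ Φ, (x, true) ∈ D → D = C1)
    (hu2 : ∀ D ∈ Φ, (x, false) ∈ D → D = C2) :
    ∃ Φ' : CNF V, CNF.is2CNF Φ' ∧ CNF.MU1 Φ' ∧ Φ'.card < Φ.card ∧
      (CNF.hasROR Φ' → CNF.hasROR Φ) := by
  set R : Clause V := (C1.erase (x, true)) ∪ (C2.erase (x, false)) with hR
  have hC12 : C1 ≠ C2 := fun he => no_taut h.1 hC1 hx1 (he ▸ hx2)
  have hRx : ∀ m ∈ R, m.1 ≠ x := by
    intro m hm hmx
    rcases Finset.mem_union.1 hm with hm' | hm'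
    · rw [Finset.mem_erase] at hm'
      obtain ⟨hmne, hmC1⟩ := hm'
      have hme : m = (x, m.2) := Prod.ext hmx rfl
      cases hc : m.2
      · rw [hc] at hme
        exact hC12 (hu2 C1 hC1 (hme ▸ hmC1))
      · rw [hc] at hme
        exact hmne hme
    · rw [Finset.mem_erase] at hm'
      obtain ⟨hmne, hmC2⟩ := hm'
      have hme : m = (x, m.2) := Prod.ext hmx rfl
      cases hc : m.2
      · rw [hc] at hme
        exact hmne hme
      · rw [hc] at hme
        exact hC12 (hu1 C2 hC2 (hme ▸ hmC2)).symm
  have hother : ∀ D ∈ Φ, D ≠ C1 → D ≠ C2 → ∀ m ∈ D, m.1 ≠ x := by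
    intro D hD hD1 hD2 m hm hmx
    have hme : m = (x, m.2) := Prod.ext hmx rfl
    cases hc : m.2
    · rw [hc] at hme
      exact hD2 (hu2 D hD (hme ▸ hm))
    · rw [hc] at hme
      exact hD1 (hu1 D hD (hme ▸ hm))
  set Φ' : CNF V := insert R ((Φ.erase C1).erase C2) with hΦ'
  have hmem' : ∀ D ∈ Φ, D ≠ C1 → D ≠ C2 → D ∈ Φ' := fun D hD h1 h2' =>
    Finset.mem_insert_of_mem (Finset.mem_erase.2 ⟨h2', Finset.mem_erase.2 ⟨h1, hD⟩⟩)
  have hmem'' : ∀ E ∈ Φ', E = R ∨ (E ∈ Φ ∧ E ≠ C1 ∧ E ≠ C2) := by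
    intro E hE
    rcases Finset.mem_insert.1 hE with hE' | hE'
    · exact Or.inl hE'
    · rw [Finset.mem_erase, Finset.mem_erase] at hE'
      exact Or.inr ⟨hE'.2.2, hE'.2.1, hE'.1⟩
  have hunsat : CNF.unsat Φ' := by
    rintro ⟨α, hα⟩
    obtain ⟨m, hm, hmh⟩ := hα R (Finset.mem_insert_self _ _)
    have hmx := hRx m hm
    rcases Finset.mem_union.1 hm with hmm | hmm
    · apply h.1.1
      refine ⟨Function.update α x false, fun D hD => ?_⟩
      by_cases hD1 : D = C1
      · subst hD1
        refine ⟨m, Finset.mem_of_mem_erase hmm, ?_⟩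
        show Function.update α x false m.1 = m.2
        rw [Function.update_of_ne hmx]; exact hmh
      · by_cases hD2 : D = C2
        · subst hD2
          refine ⟨(x, false), hx2, ?_⟩
          show Function.update α x false x = false
          rw [Function.update_self]
        · obtain ⟨k, hk, hkh⟩ := hα D (hmem' D hD hD1 hD2)
          refine ⟨k, hk, ?_⟩
          show Function.update α x false k.1 = k.2
          rw [Function.update_of_ne (hother D hD hD1 hD2 k hk)]; exact hkh
    · apply h.1.1
      refine ⟨Function.update α x true, fun D hD => ?_⟩
      by_cases hD2 : D = C2
      · subst hD2
        refine ⟨m, Finset.mem_of_mem_erase hmm, ?_⟩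
        show Function.update α x true m.1 = m.2
        rw [Function.update_of_ne hmx]; exact hmh
      · by_cases hD1 : D = C1
        · subst hD1
          refine ⟨(x, true), hx1, ?_⟩
          show Function.update α x true x = true
          rw [Function.update_self]
        · obtain ⟨k, hk, hkh⟩ := hα D (hmem' D hD hD1 hD2)
          refine ⟨k, hk, ?_⟩
          show Function.update α x true k.1 = k.2
          rw [Function.update_of_ne (hother D hD hD1 hD2 k hk)]; exact hkh
  have hRΦ : R ∉ Φ := by
    intro hRmem
    have hR1 : R ≠ C1 := fun he => hRx (x, true) (by rw [he]; exact hx1) rfl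
    have hR2 : R ≠ C2 := fun he => hRx (x, false) (by rw [he]; exact hx2) rfl
    have heq : Φ' = (Φ.erase C1).erase C2 :=
      Finset.insert_eq_self.2 (Finset.mem_erase.2 ⟨hR2, Finset.mem_erase.2 ⟨hR1, hRmem⟩⟩)
    have hss : Φ' ⊂ Φ := by
      rw [heq]
      exact ssubset_of_subset_of_ssubset (Finset.erase_subset _ _) (Finset.erase_ssubset hC1)
    exact hunsat (h.1.2 Φ' hss)
  have hmin : ∀ Ψ : CNF V, Ψ ⊂ Φ' → CNF.sat Ψ := by
    intro Ψ hΨ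
    by_cases hRΨ : R ∈ Ψ
    · obtain ⟨D, hDΦ', hDΨ⟩ := Finset.exists_of_ssubset hΨ
      have hDR : D ≠ R := fun he => hDΨ (he ▸ hRΨ)
      obtain ⟨hDΦ, hD1, hD2⟩ := (hmem'' D hDΦ').resolve_left hDR
      obtain ⟨α, hα⟩ := h.1.2 (Φ.erase D) (Finset.erase_ssubset hDΦ)
      have hα1 : Clause.holds α C1 :=
        hα C1 (Finset.mem_erase.2 ⟨fun he => hD1 he.symm, hC1⟩)
      have hα2 : Clause.holds α C2 :=
        hα C2 (Finset.mem_erase.2 ⟨fun he => hD2 he.symm, hC2⟩)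
      have hαR : Clause.holds α R := by
        obtain ⟨m1, hm1, hh1⟩ := hα1
        by_cases hm1e : m1 = (x, true)
        · obtain ⟨m2, hm2, hh2⟩ := hα2
          have hm2e : m2 ≠ (x, false) := by
            intro he
            rw [he] at hh2
            rw [hm1e] at hh1
            have e1 : α x = true := hh1
            have e2 : α x = false := hh2
            rw [e1] at e2
            exact Bool.noConfusion e2
          exact ⟨m2, Finset.mem_union_right _ (Finset.mem_erase.2 ⟨hm2e, hm2⟩), hh2⟩
        · exact ⟨m1, Finset.mem_union_left _ (Finset.mem_erase.2 ⟨hm1e, hm1⟩), hh1⟩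
      refine ⟨α, fun E hE => ?_⟩
      have hEΦ' : E ∈ Φ' := hΨ.subset hE
      rcases hmem'' E hEΦ' with hER | ⟨hEΦ, _, _⟩
      · exact hER ▸ hαR
      · have hED : E ≠ D := fun he => hDΨ (he ▸ hE)
        exact hα E (Finset.mem_erase.2 ⟨hED, hEΦ⟩)
    · have hsub : Ψ ⊆ Φ := by
        intro E hE
        rcases hmem'' E (hΨ.subset hE) with hER | ⟨hEΦ, _, _⟩
        · exact absurd (hER ▸ hE) hRΨ
        · exact hEΦ
      have hC1Ψ : C1 ∉ Ψ := by
        intro hmem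
        rcases hmem'' C1 (hΨ.subset hmem) with hER | ⟨_, hne, _⟩
        · exact hRΦ (hER ▸ hC1)
        · exact hne rfl
      exact h.1.2 Ψ (Finset.ssubset_def.2 ⟨hsub, fun hsup => hC1Ψ (hsup hC1)⟩)
  have hRnot : R ∉ (Φ.erase C1).erase C2 :=
    fun hmem => hRΦ (Finset.mem_of_mem_erase (Finset.mem_of_mem_erase hmem))
  have hC2e : C2 ∈ Φ.erase C1 := Finset.mem_erase.2 ⟨fun he => hC12 he.symm, hC2⟩
  have h2le : 2 ≤ Φ.card := Finset.one_lt_card.2 ⟨C1, hC1, C2, hC2, hC12⟩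
  have hcard' : Φ'.card + 1 = Φ.card := by
    rw [hΦ', Finset.card_insert_of_notMem hRnot, Finset.card_erase_of_mem hC2e,
      Finset.card_erase_of_mem hC1]
    omega
  have hvars : CNF.vars Φ' = (CNF.vars Φ).erase x := by
    ext y
    simp only [Finset.mem_erase]
    constructor
    · intro hy
      rw [CNF.vars, Finset.mem_biUnion] at hy
      obtain ⟨D, hD, hyD⟩ := hy
      rw [Finset.mem_image] at hyD
      obtain ⟨l, hl, hl1⟩ := hyD
      rcases hmem'' D hD with hDR | ⟨hDΦ, hD1, hD2⟩
      · subst hDR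
        have hlx : l.1 ≠ x := hRx l hl
        refine ⟨hl1 ▸ hlx, ?_⟩
        rcases Finset.mem_union.1 hl with hm | hm
        · exact hl1 ▸ var_mem_vars hC1 (Finset.mem_of_mem_erase hm)
        · exact hl1 ▸ var_mem_vars hC2 (Finset.mem_of_mem_erase hm)
      · exact ⟨hl1 ▸ hother D hDΦ hD1 hD2 l hl, hl1 ▸ var_mem_vars hDΦ hl⟩
    · rintro ⟨hyx, hy⟩
      rw [CNF.vars, Finset.mem_biUnion] at hy
      obtain ⟨D, hD, hyD⟩ := hy
      rw [Finset.mem_image] at hyD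
      obtain ⟨l, hl, hl1⟩ := hyD
      have hlx1 : l ≠ (x, true) := by
        intro he; rw [he] at hl1; exact hyx hl1.symm
      have hlx2 : l ≠ (x, false) := by
        intro he; rw [he] at hl1; exact hyx hl1.symm
      by_cases hD1 : D = C1
      · subst hD1
        exact Finset.mem_biUnion.2 ⟨R, Finset.mem_insert_self _ _,
          Finset.mem_image.2 ⟨l, Finset.mem_union_left _ (Finset.mem_erase.2 ⟨hlx1, hl⟩), hl1⟩⟩
      · by_cases hD2 : D = C2
        · subst hD2
          exact Finset.mem_biUnion.2 ⟨R, Finset.mem_insert_self _ _,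
            Finset.mem_image.2 ⟨l, Finset.mem_union_right _ (Finset.mem_erase.2 ⟨hlx2, hl⟩), hl1⟩⟩
        · exact Finset.mem_biUnion.2 ⟨D, hmem' D hD hD1 hD2, Finset.mem_image.2 ⟨l, hl, hl1⟩⟩
  have hxvars : x ∈ CNF.vars Φ := var_mem_vars hC1 hx1
  have hvpos : 1 ≤ (CNF.vars Φ).card := Finset.card_pos.2 ⟨x, hxvars⟩
  have hvcard : (CNF.vars Φ').card + 1 = (CNF.vars Φ).card := by
    rw [hvars, Finset.card_erase_of_mem hxvars]
    omega
  have hdef : CNF.deficiency Φ' = 1 := by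
    have hd := h.2
    unfold CNF.deficiency at hd ⊢
    omega
  have h2' : CNF.is2CNF Φ' := by
    intro D hD
    rcases hmem'' D hD with hDR | ⟨hDΦ, _, _⟩
    · subst hDR
      have hc1 : 1 ≤ C1.card := Finset.card_pos.2 ⟨_, hx1⟩
      have hc2 : 1 ≤ C2.card := Finset.card_pos.2 ⟨_, hx2⟩
      have hle1 := h2 C1 hC1
      have hle2 := h2 C2 hC2
      calc R.card ≤ (C1.erase (x, true)).card + (C2.erase (x, false)).card :=
            Finset.card_union_le _ _
      _ ≤ 2 := by
          rw [Finset.card_erase_of_mem hx1, Finset.card_erase_of_mem hx2]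
          omega
    · exact h2 D hDΦ
  have hlift : CNF.hasROR Φ' → CNF.hasROR Φ := by
    rintro ⟨T, hT, hmemT⟩
    refine ⟨T, Relation.ReflTransGen.head ?_ hT, hmemT⟩
    refine ⟨C1, C2, R, x, Finset.mem_def.1 hC1, ?_, ⟨hx1, hx2, rfl⟩, ?_⟩
    · rw [← Finset.erase_val]
      exact Finset.mem_def.1 hC2e
    · show Φ'.val = R ::ₘ ((Φ.val.erase C1).erase C2)
      rw [hΦ', Finset.insert_val, Multiset.ndinsert_of_notMem hRnot,
        Finset.erase_val, Finset.erase_val]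
  exact ⟨Φ', h2', ⟨⟨hunsat, hmin⟩, hdef⟩, by omega, hlift⟩

lemma main_aux : ∀ (n : ℕ) (Φ : CNF V), Φ.card ≤ n → CNF.is2CNF Φ → CNF.MU1 Φ →
    CNF.hasROR Φ := by
  intro n
  induction n with
  | zero =>
    intro Φ hcard h2 h
    exfalso
    have hΦe : Φ = ∅ := Finset.card_eq_zero.1 (Nat.le_zero.1 hcard)
    subst hΦe
    exact h.1.1 ⟨fun _ => true, fun C hC => absurd hC (Finset.notMem_empty C)⟩
  | succ n ih =>
    intro Φ hcard h2 h
    by_cases he : (∅ : Clause V) ∈ Φ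
    · exact ⟨Φ.val, Relation.ReflTransGen.refl, Finset.mem_def.1 he⟩
    · obtain ⟨x, hp1, hq1⟩ := exists_deg2 h h2 he
      obtain ⟨C1, hC1eq⟩ := Finset.card_eq_one.1 hp1
      obtain ⟨C2, hC2eq⟩ := Finset.card_eq_one.1 hq1
      have hC1f : C1 ∈ Φ.filter (fun C => (x, true) ∈ C) :=
        hC1eq ▸ Finset.mem_singleton_self C1
      have hC2f : C2 ∈ Φ.filter (fun C => (x, false) ∈ C) :=
        hC2eq ▸ Finset.mem_singleton_self C2
      rw [Finset.mem_filter] at hC1f hC2f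
      have hu1 : ∀ D ∈ Φ, (x, true) ∈ D → D = C1 := by
        intro D hD hxD
        have hm : D ∈ Φ.filter (fun C => (x, true) ∈ C) := Finset.mem_filter.2 ⟨hD, hxD⟩
        rw [hC1eq] at hm
        exact Finset.mem_singleton.1 hm
      have hu2 : ∀ D ∈ Φ, (x, false) ∈ D → D = C2 := by
        intro D hD hxD
        have hm : D ∈ Φ.filter (fun C => (x, false) ∈ C) := Finset.mem_filter.2 ⟨hD, hxD⟩
        rw [hC2eq] at hm
        exact Finset.mem_singleton.1 hm
      obtain ⟨Φ', h2', h', hlt, hlift⟩ :=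
        key_step h2 h hC1f.1 hC2f.1 hC1f.2 hC2f.2 hu1 hu2
      exact hlift (ih Φ' (by omega) h2' h')

end AuxProofs

/-- Every 2CNF formula in MU(1) has a read-once resolution refutation. -/
theorem stmt11 {V : Type} [DecidableEq V] (Φ : CNF V)
    (h2 : CNF.is2CNF Φ) (h : CNF.MU1 Φ) :
    CNF.hasROR Φ := main_aux Φ.card Φ le_rfl h2 h
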